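/- Let t be a smooth function on U ⊂ ℝ⁵ with ξ₄(t) = 0 (integrability), where ξ₄ = −(x¹+3tx²)∂₀ − t³∂₁ + t²∂₂ − t∂₃ + ∂₄, and set ξ₃ = 3x²∂₀ + 3t²∂₁ − 2t∂₂ + ∂₃, ξ₂ = −3t∂₁ + ∂₂. Then the derived distribution of H = span{ξ₄, ξ₃, ξ₂} is 4-dimensional, spanned by ξ₄, ξ₃, ξ₂ and [ξ₃, ξ₂] = −3∂₀ − 3(3x²t_{x⁰} − 3t²t_{x¹} + t_{x³})∂₁ − 2(3t·t_{x¹} − t_{x²})∂₂ at every point; in particular [ξ₄, ξ₂] and [ξ₄, ξ₃] lie in span{ξ₄, ξ₃, ξ₂, [ξ₃,ξ₂]}. -/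

import Mathlib

/-- The Lie bracket of vector fields on `ℝ⁵` written in coordinates. -/
noncomputable def lieB (X Y : (Fin 5 → ℝ) → Fin 5 → ℝ) (x : Fin 5 → ℝ) : Fin 5 → ℝ :=
  fun i => fderiv ℝ (fun y => Y y i) x (X x) - fderiv ℝ (fun y => X y i) x (Y x)

/-- The vector field `ξ₄ = −(x¹+3tx²)∂₀ − t³∂₁ + t²∂₂ − t∂₃ + ∂₄`. -/
def xi4 (t : (Fin 5 → ℝ) → ℝ) : (Fin 5 → ℝ) → Fin 5 → ℝ :=
  fun x => ![-(x 1 + 3 * t x * x 2), -(t x) ^ 3, (t x) ^ 2, -(t x), 1]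

/-- The vector field `ξ₃ = 3x²∂₀ + 3t²∂₁ − 2t∂₂ + ∂₃`. -/
def xi3 (t : (Fin 5 → ℝ) → ℝ) : (Fin 5 → ℝ) → Fin 5 → ℝ :=
  fun x => ![3 * x 2, 3 * (t x) ^ 2, -(2 * t x), 1, 0]

/-- The vector field `ξ₂ = −3t∂₁ + ∂₂`. -/
def xi2 (t : (Fin 5 → ℝ) → ℝ) : (Fin 5 → ℝ) → Fin 5 → ℝ :=
  fun x => ![0, -(3 * t x), 1, 0, 0]

/-- The partial derivative `t_{xⁱ}`. -/
noncomputable def pd (t : (Fin 5 → ℝ) → ℝ) (i : Fin 5) (x : Fin 5 → ℝ) : ℝ :=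
  fderiv ℝ t x (Pi.single i 1)

lemma clm_apply_eq (g : (Fin 5 → ℝ) →L[ℝ] ℝ) (v : Fin 5 → ℝ) :
    g v = v 0 * g (Pi.single 0 1) + v 1 * g (Pi.single 1 1) + v 2 * g (Pi.single 2 1)
      + v 3 * g (Pi.single 3 1) + v 4 * g (Pi.single 4 1) := by
  have hv : v = v 0 • (Pi.single 0 1 : Fin 5 → ℝ) + v 1 • (Pi.single 1 1 : Fin 5 → ℝ)
      + v 2 • (Pi.single 2 1 : Fin 5 → ℝ)
      + v 3 • (Pi.single 3 1 : Fin 5 → ℝ) + v 4 • (Pi.single 4 1 : Fin 5 → ℝ) := by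
    funext j; fin_cases j <;> simp [Pi.single_apply]
  conv_lhs => rw [hv]
  simp [smul_eq_mul]

/-- In the integrable case `ξ₄(t) = 0`, the derived distribution of
`H = span{ξ₄, ξ₃, ξ₂}` is 4-dimensional, spanned by `ξ₄, ξ₃, ξ₂` and
`[ξ₃,ξ₂] = −3∂₀ − 3(3x²t_{x⁰} − 3t²t_{x¹} + t_{x³})∂₁ − 2(3t·t_{x¹} − t_{x²})∂₂`;
in particular `[ξ₄,ξ₂]` and `[ξ₄,ξ₃]` lie in `span{ξ₄, ξ₃, ξ₂, [ξ₃,ξ₂]}`. -/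
theorem derived_distribution_integrable_case
    (U : Set (Fin 5 → ℝ)) (hU : IsOpen U) (t : (Fin 5 → ℝ) → ℝ)
    (ht : ContDiffOn ℝ (⊤ : ℕ∞) t U)
    (hJ : ∀ x ∈ U,
      (x 1 + 3 * t x * x 2) * pd t 0 x + (t x) ^ 3 * pd t 1 x - (t x) ^ 2 * pd t 2 x +
        t x * pd t 3 x - pd t 4 x = 0) :
    ∀ x ∈ U,
      lieB (xi3 t) (xi2 t) x =
        ![-3, -(3 * (3 * x 2 * pd t 0 x - 3 * (t x) ^ 2 * pd t 1 x + pd t 3 x)),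
          -(2 * (3 * t x * pd t 1 x - pd t 2 x)), 0, 0] ∧
      lieB (xi4 t) (xi2 t) x ∈ Submodule.span ℝ
        ({xi4 t x, xi3 t x, xi2 t x, lieB (xi3 t) (xi2 t) x} : Set (Fin 5 → ℝ)) ∧
      lieB (xi4 t) (xi3 t) x ∈ Submodule.span ℝ
        ({xi4 t x, xi3 t x, xi2 t x, lieB (xi3 t) (xi2 t) x} : Set (Fin 5 → ℝ)) ∧
      LinearIndependent ℝ ![xi4 t x, xi3 t x, xi2 t x, lieB (xi3 t) (xi2 t) x] := by
  intro x hx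
  have hd : DifferentiableAt ℝ t x :=
    (ht.contDiffAt (hU.mem_nhds hx)).differentiableAt (by simp)
  have hf : HasFDerivAt t (fderiv ℝ t x) x := hd.hasFDerivAt
  have hfa : ∀ v : Fin 5 → ℝ, fderiv ℝ t x v =
      v 0 * pd t 0 x + v 1 * pd t 1 x + v 2 * pd t 2 x + v 3 * pd t 3 x + v 4 * pd t 4 x := by
    intro v
    simpa [pd] using clm_apply_eq (fderiv ℝ t x) v
  have hP : ∀ i : Fin 5, HasFDerivAt (fun y : Fin 5 → ℝ => y i)
      ((ContinuousLinearMap.proj i : (Fin 5 → ℝ) →L[ℝ] ℝ)) x :=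
    fun i => hasFDerivAt_apply (𝕜 := ℝ) i x
  -- derivatives of all component functions (in simp-normal form)
  have eA : fderiv ℝ (fun y : Fin 5 → ℝ => 3 * y 2) x
      = (3:ℝ) • (ContinuousLinearMap.proj 2 : (Fin 5 → ℝ) →L[ℝ] ℝ) := ((hP 2).const_mul 3).fderiv
  have eB : fderiv ℝ (fun y => 3 * t y) x = (3:ℝ) • fderiv ℝ t x := (hf.const_mul 3).fderiv
  have eC : fderiv ℝ (fun y => 2 * t y) x = (2:ℝ) • fderiv ℝ t x := (hf.const_mul 2).fderiv
  have eD : fderiv ℝ (fun y => t y ^ 2) x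
      = t x • fderiv ℝ t x + t x • fderiv ℝ t x := by
    have h := (hf.mul hf).fderiv
    rw [← h]
    congr 1
    funext y
    simp only [Pi.mul_apply]; ring
  have eE : fderiv ℝ (fun y => 3 * t y ^ 2) x
      = (3:ℝ) • (t x • fderiv ℝ t x + t x • fderiv ℝ t x) := by
    have h : HasFDerivAt (fun y => t y ^ 2) (t x • fderiv ℝ t x + t x • fderiv ℝ t x) x := by
      have := hf.mul hf
      have e : (fun y => t y ^ 2) = t * t := by funext y; simp only [Pi.mul_apply]; ring
      rw [e]; exact this
    exact (h.const_mul 3).fderiv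
  have eF : fderiv ℝ (fun y => t y ^ 3) x
      = (t x * t x) • fderiv ℝ t x + t x • (t x • fderiv ℝ t x + t x • fderiv ℝ t x) := by
    have h := ((hf.mul hf).mul hf).fderiv
    rw [Pi.mul_apply] at h
    rw [← h]
    congr 1
    funext y
    simp only [Pi.mul_apply]; ring
  have eG : fderiv ℝ (fun y : Fin 5 → ℝ => -(3 * t y * y 2) + -y 1) x
      = -((3 * t x) • (ContinuousLinearMap.proj 2 : (Fin 5 → ℝ) →L[ℝ] ℝ)
          + x 2 • ((3:ℝ) • fderiv ℝ t x))
        + -(ContinuousLinearMap.proj 1 : (Fin 5 → ℝ) →L[ℝ] ℝ) :=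
    ((((hf.const_mul 3).mul (hP 2)).neg).add ((hP 1).neg)).fderiv
  have hp4 : pd t 4 x = (x 1 + 3 * t x * x 2) * pd t 0 x + t x ^ 3 * pd t 1 x
      - t x ^ 2 * pd t 2 x + t x * pd t 3 x := by linarith [hJ x hx]
  -- the bracket [ξ₃, ξ₂]
  have hB : lieB (xi3 t) (xi2 t) x =
      ![-3, -(3 * (3 * x 2 * pd t 0 x - 3 * (t x) ^ 2 * pd t 1 x + pd t 3 x)),
        -(2 * (3 * t x * pd t 1 x - pd t 2 x)), 0, 0] := by
    funext i
    fin_cases i <;>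
      simp [lieB, xi2, xi3, eA, eB, eC, eD, eE, eF, eG, hfa,
        ContinuousLinearMap.add_apply, ContinuousLinearMap.smul_apply,
        ContinuousLinearMap.neg_apply, ContinuousLinearMap.proj_apply, smul_eq_mul] <;>
      ring
  -- the bracket [ξ₄, ξ₂] is a multiple of ξ₃
  have hb2 : lieB (xi4 t) (xi2 t) x = (fderiv ℝ t x (xi2 t x)) • xi3 t x := by
    funext i
    fin_cases i <;>
      simp [lieB, xi2, xi3, xi4, eA, eB, eC, eD, eE, eF, eG, hfa,
        ContinuousLinearMap.add_apply, ContinuousLinearMap.smul_apply,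
        ContinuousLinearMap.neg_apply, ContinuousLinearMap.proj_apply, smul_eq_mul, hp4] <;>
      ring1
  -- the bracket [ξ₄, ξ₃] is a multiple of ξ₃
  have hb3 : lieB (xi4 t) (xi3 t) x = (fderiv ℝ t x (xi3 t x)) • xi3 t x := by
    funext i
    fin_cases i <;>
      simp [lieB, xi2, xi3, xi4, eA, eB, eC, eD, eE, eF, eG, hfa,
        ContinuousLinearMap.add_apply, ContinuousLinearMap.smul_apply,
        ContinuousLinearMap.neg_apply, ContinuousLinearMap.proj_apply, smul_eq_mul, hp4] <;>
      ring1
  have hmem3 : xi3 t x ∈ ({xi4 t x, xi3 t x, xi2 t x, lieB (xi3 t) (xi2 t) x}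
      : Set (Fin 5 → ℝ)) := by simp
  refine ⟨hB, ?_, ?_, ?_⟩
  · rw [hb2]
    exact Submodule.smul_mem _ _ (Submodule.subset_span hmem3)
  · rw [hb3]
    exact Submodule.smul_mem _ _ (Submodule.subset_span hmem3)
  · rw [hB]
    refine Fintype.linearIndependent_iff.2 ?_
    intro g hg
    have h4 := congrFun hg 4
    have h3 := congrFun hg 3
    have h0 := congrFun hg 0
    have h2 := congrFun hg 2
    simp [Fin.sum_univ_four, xi4, xi3, xi2, Matrix.vecHead, Matrix.vecTail] at h4 h3 h0 h2
    have hg0 : g 0 = 0 := h4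
    rw [hg0] at h3 h0 h2
    simp at h3 h0 h2
    have hg1 : g 1 = 0 := h3
    rw [hg1] at h0 h2
    simp at h0 h2
    have hg3 : g 3 = 0 := h0
    rw [hg3] at h2
    simp at h2
    intro i
    fin_cases i
    · exact hg0
    · exact hg1
    · exact h2
    · exact hg3
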